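/- arXiv:1602.03722 — 10 statements merged into one kernel-verified Lean document; each statement's English description precedes it below -/
import Mathlib

section
/- If there exists a perfect binary sequence of length n > 1 (all nontrivial periodic autocorrelations equal to zero), then n is divisible by 4. -/
open Finset

lemma shift_sum (n k : ℕ) (hn : 0 < n) (f : ℕ → ℤ) :
    ∑ u ∈ Finset.range n, f ((k + u) % n) = ∑ j ∈ Finset.range n, f j := by
  apply Finset.sum_nbij' (i := fun u => (k + u) % n) (j := fun v => (v + n - k % n) % n)
  · intro a ha; simp only [mem_range] at *; exact Nat.mod_lt _ hn
  · intro a ha; simp only [mem_range] at *; exact Nat.mod_lt _ hn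
  · intro a ha
    simp only [mem_range] at ha
    have hr : k % n < n := Nat.mod_lt _ hn
    have h1 : (k + a) % n = (k % n + a) % n := by
      conv_lhs => rw [Nat.add_mod, Nat.mod_eq_of_lt ha]
    by_cases h : k % n + a < n
    · rw [h1, Nat.mod_eq_of_lt h]
      have : k % n + a + n - k % n = a + n := by omega
      rw [this, Nat.add_mod_right, Nat.mod_eq_of_lt ha]
    · have h2 : (k % n + a) % n = k % n + a - n := by
        rw [Nat.mod_eq_sub_mod (by omega), Nat.mod_eq_of_lt (by omega)]
      rw [h1, h2]
      have : k % n + a - n + n - k % n = a := by omega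
      rw [this, Nat.mod_eq_of_lt ha]
  · intro v hv
    simp only [mem_range] at hv
    have hr : k % n < n := Nat.mod_lt _ hn
    have hd : n * (k / n) + k % n = k := Nat.div_add_mod k n
    by_cases h : v + n - k % n < n
    · rw [Nat.mod_eq_of_lt h]
      have : k + (v + n - k % n) = n * (k / n) + (n + v) := by omega
      rw [this, Nat.mul_add_mod, Nat.add_mod_left, Nat.mod_eq_of_lt hv]
    · have h2 : (v + n - k % n) % n = v - k % n := by
        rw [Nat.mod_eq_sub_mod (by omega)]
        rw [show v + n - k % n - n = v - k % n by omega, Nat.mod_eq_of_lt (by omega)]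
      rw [h2, show k + (v - k % n) = n * (k / n) + v by omega, Nat.mul_add_mod,
        Nat.mod_eq_of_lt hv]
  · intros; rfl

theorem perfect_binary_length_div_four (n : ℕ) (hn : 1 < n) (A : ℕ → ℤ)
    (hA : ∀ k < n, A k = 1 ∨ A k = -1)
    (hperf : ∀ u, 0 < u → u < n →
      (∑ k ∈ Finset.range n, A k * A ((k + u) % n)) = 0) :
    4 ∣ n := by
  have hn0 : 0 < n := by omega
  set S := ∑ k ∈ Finset.range n, A k with hSdef
  -- double sum equals S * S
  have hdouble : ∑ u ∈ Finset.range n, (∑ k ∈ Finset.range n, A k * A ((k + u) % n))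
      = S * S := by
    rw [Finset.sum_comm]
    calc ∑ k ∈ Finset.range n, ∑ u ∈ Finset.range n, A k * A ((k + u) % n)
        = ∑ k ∈ Finset.range n, A k * ∑ u ∈ Finset.range n, A ((k + u) % n) := by
          simp [Finset.mul_sum]
      _ = ∑ k ∈ Finset.range n, A k * S := by
          refine Finset.sum_congr rfl fun k _ => ?_
          rw [shift_sum n k hn0]
      _ = S * S := by rw [← Finset.sum_mul]
  -- the double sum equals n
  have hdiag : ∑ u ∈ Finset.range n, (∑ k ∈ Finset.range n, A k * A ((k + u) % n))
      = (n : ℤ) := by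
    rw [Finset.sum_eq_single_of_mem 0 (Finset.mem_range.mpr hn0)
      (fun u hu hu0 => hperf u (Nat.pos_of_ne_zero hu0) (Finset.mem_range.mp hu))]
    have : ∀ k ∈ Finset.range n, A k * A ((k + 0) % n) = 1 := by
      intro k hk
      rw [Nat.add_zero, Nat.mod_eq_of_lt (Finset.mem_range.mp hk)]
      rcases hA k (Finset.mem_range.mp hk) with h | h <;> rw [h] <;> ring
    rw [Finset.sum_congr rfl this, Finset.sum_const, Finset.card_range]
    simp
  have hS : (n : ℤ) = S * S := by rw [← hdouble, hdiag]
  -- n is even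
  have heven : 2 ∣ n := by
    have h1 := hperf 1 one_pos hn
    have key : ∑ k ∈ Finset.range n, ((A k * A ((k + 1) % n) : ℤ) : ZMod 2)
        = (0 : ZMod 2) := by rw [← Int.cast_sum, h1, Int.cast_zero]
    have each : ∀ k ∈ Finset.range n, ((A k * A ((k + 1) % n) : ℤ) : ZMod 2) = 1 := by
      intro k hk
      have hk1 : (k + 1) % n < n := Nat.mod_lt _ hn0
      rcases hA k (Finset.mem_range.mp hk) with h | h <;>
        rcases hA _ hk1 with h' | h' <;> rw [h, h'] <;> push_cast <;> decide
    rw [Finset.sum_congr rfl each, Finset.sum_const, Finset.card_range] at key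
    have : ((n : ℕ) : ZMod 2) = 0 := by simpa using key
    exact (ZMod.natCast_eq_zero_iff n 2).mp this
  -- hence S is even
  have hS2 : (2 : ℤ) ∣ S := by
    have : (2 : ℤ) ∣ S * S := by
      rw [← hS]; exact_mod_cast Int.natCast_dvd_natCast.mpr heven
    exact (Int.prime_two.dvd_mul.mp this).elim id id
  obtain ⟨t, ht⟩ := hS2
  have : (4 : ℤ) ∣ (n : ℤ) := ⟨t * t, by rw [hS, ht]; ring⟩
  exact_mod_cast this
end

section
/- A balanced binary sequence of length n > 1 with n ≡ 0 (mod 4) cannot be optimal: if |∑_{k=0}^{n-1} A(k)| ≤ 1 and n ≡ 0 (mod 4), then there exists u with 0 < u < n and R_u(A) ≠ 0. -/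
open Finset

theorem balanced_not_optimal_zero_mod_four (n : ℕ) (hn : 1 < n) (h4 : n % 4 = 0)
    (A : ℕ → ℤ) (hA : ∀ k < n, A k = 1 ∨ A k = -1)
    (hbal : |∑ k ∈ Finset.range n, A k| ≤ 1) :
    ∃ u, 0 < u ∧ u < n ∧
      (∑ k ∈ Finset.range n, A k * A ((k + u) % n)) ≠ 0 := by
  by_contra hcon
  push_neg at hcon
  have hnpos : 0 < n := by omega
  -- shift invariance of the sum
  have key : ∀ k < n, ∑ u ∈ Finset.range n, A ((k + u) % n) = ∑ j ∈ Finset.range n, A j := by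
    intro k hk
    refine Finset.sum_nbij' (i := fun u => (k + u) % n) (j := fun v => (v + (n - k)) % n)
      ?_ ?_ ?_ ?_ ?_
    · intro a ha
      exact Finset.mem_range.mpr (Nat.mod_lt _ hnpos)
    · intro a ha
      exact Finset.mem_range.mpr (Nat.mod_lt _ hnpos)
    · intro a ha
      have ha' := Finset.mem_range.mp ha
      simp only [Nat.mod_add_mod]
      have : k + a + (n - k) = a + n := by omega
      rw [this, Nat.add_mod_right, Nat.mod_eq_of_lt ha']
    · intro a ha
      have ha' := Finset.mem_range.mp ha
      simp only [Nat.add_mod_mod]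
      have : k + (a + (n - k)) = a + n := by omega
      rw [this, Nat.add_mod_right, Nat.mod_eq_of_lt ha']
    · intro a ha; rfl
  set S := ∑ k ∈ Finset.range n, A k with hSdef
  -- S is even
  have hSmod : S % 2 = 0 := by
    have : S % 2 = (∑ k ∈ Finset.range n, A k % 2) % 2 := Finset.sum_int_mod _ _ _
    rw [this]
    have : ∑ k ∈ Finset.range n, A k % 2 = ∑ k ∈ Finset.range n, (1 : ℤ) := by
      refine Finset.sum_congr rfl fun k hk => ?_
      rcases hA k (Finset.mem_range.mp hk) with h | h <;> rw [h] <;> decide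
    rw [this]
    simp only [Finset.sum_const, Finset.card_range, nsmul_eq_mul, mul_one]
    omega
  have hS0 : S = 0 := by
    rw [abs_le] at hbal
    omega
  -- total sum of autocorrelations equals S * S
  have hT : ∑ u ∈ Finset.range n, ∑ k ∈ Finset.range n, A k * A ((k + u) % n) = S * S := by
    rw [Finset.sum_comm]
    have : ∀ k ∈ Finset.range n,
        ∑ u ∈ Finset.range n, A k * A ((k + u) % n) = A k * S := by
      intro k hk
      rw [← Finset.mul_sum, key k (Finset.mem_range.mp hk)]
    rw [Finset.sum_congr rfl this, ← Finset.sum_mul]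
  -- but the sum reduces to R_0 = n
  have hR0 : ∑ k ∈ Finset.range n, A k * A ((k + 0) % n) = (n : ℤ) := by
    have : ∀ k ∈ Finset.range n, A k * A ((k + 0) % n) = 1 := by
      intro k hk
      have hk' := Finset.mem_range.mp hk
      rw [Nat.add_zero, Nat.mod_eq_of_lt hk']
      rcases hA k hk' with h | h <;> rw [h] <;> ring
    rw [Finset.sum_congr rfl this]
    simp
  have hsingle : ∑ u ∈ Finset.range n, ∑ k ∈ Finset.range n, A k * A ((k + u) % n)
      = ∑ k ∈ Finset.range n, A k * A ((k + 0) % n) := by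
    refine Finset.sum_eq_single_of_mem 0 (Finset.mem_range.mpr hnpos) ?_
    intro u hu hune
    exact hcon u (Nat.pos_of_ne_zero hune) (Finset.mem_range.mp hu)
  rw [hsingle, hR0, hS0] at hT
  simp at hT
  omega
end

section
/- The nontrivial periodic autocorrelations of a Legendre sequence of prime length p with p ≡ 3 (mod 4) are all equal to −1: for 0 < u < p, R_u(A) = −1. -/
open Finset
open scoped Classical

lemma quadChar_shift_sum (p : ℕ) [Fact p.Prime] (hp2 : p ≠ 2) (b : ZMod p) (hb : b ≠ 0) :
    ∑ x : ZMod p, quadraticChar (ZMod p) x * quadraticChar (ZMod p) (x + b) = -1 := by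
  have hchar : ringChar (ZMod p) ≠ 2 := by
    rw [ZMod.ringChar_zmod_n]; exact hp2
  set χ := quadraticChar (ZMod p)
  have key : ∀ x : ZMod p, x ≠ 0 → χ x * χ (x + b) = χ (1 + b * x⁻¹) := by
    intro x hx
    have h : x + b = x * (1 + b * x⁻¹) := by
      field_simp
    rw [h, map_mul, ← mul_assoc, ← pow_two, quadraticChar_sq_one hx, one_mul]
  rw [← Finset.sum_subset (Finset.subset_univ (Finset.univ.erase (0 : ZMod p)))]
  · rw [Finset.sum_congr rfl (fun x hx => key x (Finset.ne_of_mem_erase hx))]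
    have himg : ∑ x ∈ Finset.univ.erase (0 : ZMod p), χ (1 + b * x⁻¹)
        = ∑ y ∈ Finset.univ.erase (1 : ZMod p), χ y := by
      refine Finset.sum_nbij' (fun x => 1 + b * x⁻¹) (fun y => b * (y - 1)⁻¹)
        ?_ ?_ ?_ ?_ ?_
      · intro x hx
        have hx0 := Finset.ne_of_mem_erase hx
        simp only [Finset.mem_erase, Finset.mem_univ, and_true]
        intro h
        have h' : b * x⁻¹ = 0 := by linear_combination h
        rcases mul_eq_zero.mp h' with h'' | h''
        · exact hb h''
        · exact hx0 (inv_eq_zero.mp h'')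
      · intro y hy
        have hy1 := Finset.ne_of_mem_erase hy
        simp only [Finset.mem_erase, Finset.mem_univ, and_true]
        intro h
        rcases mul_eq_zero.mp h with h'' | h''
        · exact hb h''
        · exact hy1 (by have := inv_eq_zero.mp h''; linear_combination this)
      · intro x hx
        have hx0 := Finset.ne_of_mem_erase hx
        field_simp
        simp [hb]
      · intro y hy
        have hy1 := Finset.ne_of_mem_erase hy
        have h1 : y - 1 ≠ 0 := sub_ne_zero.mpr hy1
        field_simp
        ring
      · intro x hx; rfl
    rw [himg, Finset.sum_erase_eq_sub (Finset.mem_univ _), quadraticChar_sum_zero hchar,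
      map_one]
    ring
  · intro x _ hx
    simp only [Finset.mem_erase, Finset.mem_univ, and_true, not_not] at hx
    simp [hx, χ]

theorem legendre_autocorrelation_three_mod_four (p : ℕ) (hp : p.Prime) (h3 : p % 4 = 3)
    (u : ℕ) (hu : 0 < u) (hup : u < p) :
    let A : ℕ → ℤ := fun k =>
      if k % p = 0 then 1 else if IsSquare ((k : ZMod p)) then 1 else -1
    (∑ k ∈ Finset.range p, A k * A ((k + u) % p)) = -1 := by
  intro A
  haveI : Fact p.Prime := ⟨hp⟩
  have hp2 : p ≠ 2 := by omega
  have hchar : ringChar (ZMod p) ≠ 2 := by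
    rw [ZMod.ringChar_zmod_n]; exact hp2
  set χ := quadraticChar (ZMod p) with hχ
  set g : ZMod p → ℤ := fun a => if a = 0 then 1 else χ a with hg
  have hA : ∀ k : ℕ, A k = g ((k : ZMod p)) := by
    intro k
    simp only [hg, A]
    have h0 : k % p = 0 ↔ ((k : ZMod p) = 0) := by
      rw [ZMod.natCast_eq_zero_iff, Nat.dvd_iff_mod_eq_zero]
    by_cases hk : (k : ZMod p) = 0
    · rw [if_pos (h0.mpr hk), if_pos hk]
    · rw [if_neg (fun h => hk (h0.mp h)), if_neg hk]
      simp only [hχ, quadraticChar_apply, quadraticCharFun, hk, if_false]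
      by_cases hs : IsSquare ((k : ZMod p)) <;> simp [hs]
  have hshift : ∀ k : ℕ, (((k + u) % p : ℕ) : ZMod p) = (k : ZMod p) + (u : ZMod p) := by
    intro k
    rw [ZMod.natCast_mod, Nat.cast_add]
  have hsum : (∑ k ∈ Finset.range p, A k * A ((k + u) % p))
      = ∑ a : ZMod p, g a * g (a + (u : ZMod p)) := by
    rw [Finset.sum_congr rfl (fun k _ => by rw [hA, hA, hshift])]
    refine Finset.sum_nbij' (fun k => (k : ZMod p)) (fun a => a.val) ?_ ?_ ?_ ?_ ?_
    · intro k _; exact Finset.mem_univ _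
    · intro a _; exact Finset.mem_range.mpr (ZMod.val_lt a)
    · intro k hk; exact ZMod.val_cast_of_lt (Finset.mem_range.mp hk)
    · intro a _; exact ZMod.natCast_rightInverse a
    · intro k _; rfl
  rw [hsum]
  have hu0 : (u : ZMod p) ≠ 0 := by
    rw [Ne, ZMod.natCast_eq_zero_iff]
    intro h
    exact absurd (Nat.le_of_dvd hu h) (not_le.mpr hup)
  set v : ZMod p := (u : ZMod p)
  have hgg : ∀ a : ZMod p, g a * g (a + v)
      = χ a * χ (a + v) + (if a = -v then χ a else 0) + (if a = 0 then χ (a + v) else 0) := by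
    intro a
    by_cases h1 : a = 0
    · have h2 : a + v ≠ 0 := by rw [h1, zero_add]; exact hu0
      have h3' : a ≠ -v := by
        rw [h1]; intro h; exact hu0 (neg_eq_zero.mp h.symm)
      simp [hg, h1, h2, h3', hu0, MulChar.map_zero]
    · by_cases h2 : a = -v
      · have h4 : a + v = 0 := by rw [h2]; ring
        simp [hg, h1, h2, h4, hu0, MulChar.map_zero]
      · have h4 : a + v ≠ 0 := by
          intro h; exact h2 (by linear_combination h)
        simp [hg, h1, h2, h4]
  rw [Finset.sum_congr rfl (fun a _ => hgg a)]
  rw [Finset.sum_add_distrib, Finset.sum_add_distrib]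
  rw [Finset.sum_ite_eq' Finset.univ (-v) (fun a => χ a),
    Finset.sum_ite_eq' Finset.univ (0 : ZMod p) (fun a => χ (a + v))]
  have hmain : ∑ a : ZMod p, χ a * χ (a + v) = -1 := quadChar_shift_sum p hp2 v hu0
  have hneg : χ (-v) = -χ v := by
    have : χ (-1) = -1 := by
      rw [hχ, quadraticChar_neg_one hchar, ZMod.card p]
      exact ZMod.χ₄_nat_three_mod_four h3
    calc χ (-v) = χ (-1) * χ v := by rw [← map_mul]; ring_nf
    _ = -χ v := by rw [this]; ring
  simp [hmain, hneg, zero_add]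
end

section
/- For an odd prime p with p ≡ 1 (mod 4), the nontrivial periodic autocorrelations of the Legendre sequence of length p lie in {1, −3}. -/
open Finset
open scoped Classical

-- shifted sum of quadratic character
lemma quadChar_shift_sum_s9 {F : Type*} [Field F] [Fintype F] [DecidableEq F]
    (hF : ringChar F ≠ 2) (b : F) (hb : b ≠ 0) :
    ∑ a : F, quadraticChar F a * quadraticChar F (a + b) = -1 := by
  classical
  have h0 : ∑ a : F, quadraticChar F a * quadraticChar F (a + b)
      = ∑ a ∈ Finset.univ.erase (0 : F), quadraticChar F a * quadraticChar F (a + b) := by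
    rw [Finset.sum_erase_eq_sub (Finset.mem_univ _)]
    simp [quadraticChar_zero]
  rw [h0]
  have key : ∀ a ∈ Finset.univ.erase (0 : F),
      quadraticChar F a * quadraticChar F (a + b) = quadraticChar F (1 + b * a⁻¹) := by
    intro a ha
    have ha0 : a ≠ 0 := Finset.ne_of_mem_erase ha
    have : a + b = a * (1 + b * a⁻¹) := by field_simp
    rw [this, map_mul, ← mul_assoc, ← pow_two, quadraticChar_sq_one ha0, one_mul]
  rw [Finset.sum_congr rfl key]
  have hbij : ∑ a ∈ Finset.univ.erase (0 : F), quadraticChar F (1 + b * a⁻¹)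
      = ∑ c ∈ Finset.univ.erase (1 : F), quadraticChar F c := by
    apply Finset.sum_nbij' (fun a => 1 + b * a⁻¹) (fun c => b * (c - 1)⁻¹)
    · intro a ha
      have ha0 : a ≠ 0 := Finset.ne_of_mem_erase ha
      simp only [Finset.mem_erase, Finset.mem_univ, and_true]
      intro h
      apply hb
      have : b * a⁻¹ = 0 := by linear_combination h
      rcases mul_eq_zero.mp this with h' | h'
      · exact h'
      · exact absurd (inv_eq_zero.mp h') ha0
    · intro c hc
      have hc1 : c ≠ 1 := Finset.ne_of_mem_erase hc
      simp only [Finset.mem_erase, Finset.mem_univ, and_true]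
      exact mul_ne_zero hb (inv_ne_zero (sub_ne_zero.mpr hc1))
    · intro a ha
      have ha0 : a ≠ 0 := Finset.ne_of_mem_erase ha
      field_simp
      simp [hb]
    · intro c hc
      have hc1 : c ≠ 1 := Finset.ne_of_mem_erase hc
      have : (c : F) - 1 ≠ 0 := sub_ne_zero.mpr hc1
      field_simp
      ring
    · intro a ha; rfl
  rw [hbij, Finset.sum_erase_eq_sub (Finset.mem_univ _), quadraticChar_sum_zero hF,
    map_one]
  ring

theorem legendre_autocorrelation_one_mod_four (p : ℕ) (hp : p.Prime) (h1 : p % 4 = 1)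
    (u : ℕ) (hu : 0 < u) (hup : u < p) :
    let A : ℕ → ℤ := fun k =>
      if k % p = 0 then 1 else if IsSquare ((k : ZMod p)) then 1 else -1
    (∑ k ∈ Finset.range p, A k * A ((k + u) % p)) = 1 ∨
      (∑ k ∈ Finset.range p, A k * A ((k + u) % p)) = -3 := by
  intro A
  haveI : Fact p.Prime := ⟨hp⟩
  have hp2 : p ≠ 2 := by omega
  have hringchar : ringChar (ZMod p) ≠ 2 := by
    rw [ZMod.ringChar_zmod_n]; exact hp2
  set χ := quadraticChar (ZMod p) with hχ
  set B : ZMod p → ℤ := fun x => χ x + (if x = 0 then 1 else 0) with hB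
  -- A k = B (k : ZMod p)
  have hAB : ∀ k : ℕ, A k = B ((k : ZMod p)) := by
    intro k
    simp only [hB, A]
    by_cases h0 : (k : ZMod p) = 0
    · have : k % p = 0 := by
        rwa [ZMod.natCast_eq_zero_iff, Nat.dvd_iff_mod_eq_zero] at h0
      rw [if_pos this, h0, if_pos rfl, hχ, quadraticChar_zero, zero_add]
    · have hmod : ¬ k % p = 0 := by
        rw [ZMod.natCast_eq_zero_iff, Nat.dvd_iff_mod_eq_zero] at h0
        exact h0
      rw [if_neg hmod, if_neg h0]
      by_cases hs : IsSquare ((k : ZMod p))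
      · rw [if_pos hs, hχ, (quadraticChar_one_iff_isSquare h0).mpr hs, add_zero]
      · rw [if_neg hs, hχ, quadraticChar_neg_one_iff_not_isSquare.mpr hs, add_zero]
  have huz : (u : ZMod p) ≠ 0 := by
    rw [Ne, ZMod.natCast_eq_zero_iff]
    intro h
    exact absurd (Nat.le_of_dvd hu h) (not_le.mpr hup)
  -- rewrite the sum over range p as sum over ZMod p
  have hsum : (∑ k ∈ Finset.range p, A k * A ((k + u) % p))
      = ∑ x : ZMod p, B x * B (x + u) := by
    rw [Finset.sum_congr rfl (fun k _ => by
      rw [hAB k, hAB ((k + u) % p), ZMod.natCast_mod, Nat.cast_add])]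
    refine Finset.sum_nbij' (i := fun k => ((k : ℕ) : ZMod p)) (j := fun x => x.val)
      ?_ ?_ ?_ ?_ ?_
    · intro k _; exact Finset.mem_univ _
    · intro x _; exact Finset.mem_range.mpr (ZMod.val_lt x)
    · intro k hk; exact ZMod.val_natCast_of_lt (Finset.mem_range.mp hk)
    · intro x _; exact ZMod.natCast_rightInverse x
    · intro k _; rfl
  rw [hsum]
  have expand : ∀ x : ZMod p, B x * B (x + u)
      = χ x * χ (x + u) + χ x * (if x + u = 0 then 1 else 0)
        + (if x = 0 then 1 else 0) * χ (x + u) := by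
    intro x
    by_cases hx : x = 0
    · have h' : x + (u : ZMod p) ≠ 0 := by rw [hx, zero_add]; exact huz
      simp only [hB, if_pos hx, if_neg h']; ring
    · simp only [hB, if_neg hx]; ring
  have h2 : ∑ x : ZMod p, χ x * (if x + u = 0 then 1 else 0) = χ (-u) := by
    rw [Finset.sum_eq_single (-(u : ZMod p))]
    · simp
    · intro x _ hx
      have : ¬ (x + (u : ZMod p) = 0) := fun h => hx (by linear_combination h)
      simp [this]
    · simp
  have h3 : ∑ x : ZMod p, (if x = 0 then 1 else 0) * χ (x + u) = χ u := by
    rw [Finset.sum_eq_single (0 : ZMod p)]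
    · simp
    · intro x _ hx; simp [hx]
    · simp
  have h1' : ∑ x : ZMod p, χ x * χ (x + u) = -1 :=
    quadChar_shift_sum_s9 hringchar (u : ZMod p) huz
  have hneg : χ (-(u : ZMod p)) = χ u := by
    rw [hχ, show (-(u : ZMod p)) = (-1) * u by ring, map_mul,
      quadraticChar_neg_one hringchar, ZMod.card, ZMod.χ₄_nat_one_mod_four h1, one_mul]
  rw [Finset.sum_congr rfl (fun x _ => expand x), Finset.sum_add_distrib,
    Finset.sum_add_distrib, h1', h2, h3, hneg]
  have hd := quadraticChar_dichotomy huz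
  rw [← hχ] at hd
  rcases hd with h | h
  · left; rw [h]; ring
  · right; rw [h]; ring
end

section
/- Every Barker sequence of even length n > 2 is a perfect binary sequence: all its nontrivial periodic autocorrelations are zero, and moreover n is divisible by 4. -/
open Finset

lemma aux_parity (n u : ℕ) (A : ℕ → ℤ) (hA : ∀ k < n, A k = 1 ∨ A k = -1)
    (hu : u < n) :
    (2:ℤ) ∣ (∑ k ∈ Finset.range (n - u), A k * A (k + u)) - ((n - u : ℕ) : ℤ) := by
  have h : ((n - u : ℕ) : ℤ) = ∑ k ∈ Finset.range (n - u), (1:ℤ) := by simp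
  rw [h, ← Finset.sum_sub_distrib]
  refine Finset.dvd_sum ?_
  intro k hk
  simp only [Finset.mem_range] at hk
  have h1 := hA k (by omega)
  have h2 := hA (k + u) (by omega)
  rcases h1 with h1 | h1 <;> rcases h2 with h2 | h2 <;> rw [h1, h2] <;> norm_num

lemma aux_R (n u : ℕ) (A : ℕ → ℤ) (hu0 : 0 < u) (hun : u < n) :
    (∑ k ∈ Finset.range (n - u), A k * A (k + u)) +
      (∑ k ∈ Finset.range (n - (n - u)), A k * A (k + (n - u))) =
    ∑ k ∈ Finset.range n, A k * A ((k + u) % n) := by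
  have h1 : n - (n - u) = u := by omega
  symm
  rw [Finset.range_eq_Ico,
    ← Finset.sum_Ico_consecutive (fun k => A k * A ((k + u) % n))
      (by omega : 0 ≤ n - u) (by omega : n - u ≤ n),
    ← Finset.range_eq_Ico]
  congr 1
  · apply Finset.sum_congr rfl
    intro k hk
    simp only [Finset.mem_range] at hk
    rw [Nat.mod_eq_of_lt (by omega)]
  · rw [Finset.sum_Ico_eq_sum_range, h1]
    apply Finset.sum_congr rfl
    intro k hk
    simp only [Finset.mem_range] at hk
    have h3 : (n - u + k + u) % n = k := by
      have h4 : n - u + k + u = n + k := by omega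
      rw [h4, Nat.add_mod_left]
      exact Nat.mod_eq_of_lt (by omega)
    have h5 : n - u + k = k + (n - u) := by omega
    rw [mul_comm, h3, h5]

lemma aux_mod4 (n u : ℕ) (A : ℕ → ℤ) (hA : ∀ k < n, A k = 1 ∨ A k = -1)
    (hn : 0 < n) (hu : u < n) :
    (4:ℤ) ∣ (n : ℤ) - ∑ k ∈ Finset.range n, A k * A ((k + u) % n) := by
  set f : ℕ → ℤ := fun k => A k * A ((k + u) % n) with hf
  have hterm : ∀ k ∈ Finset.range n, f k = 1 ∨ f k = -1 := by
    intro k hk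
    simp only [Finset.mem_range] at hk
    have h1 := hA k hk
    have h2 := hA ((k + u) % n) (Nat.mod_lt _ hn)
    rcases h1 with h1 | h1 <;> rcases h2 with h2 | h2 <;> simp [hf, h1, h2]
  have hb : ∏ k ∈ Finset.range n, A ((k + u) % n) = ∏ k ∈ Finset.range n, A k := by
    apply Finset.prod_nbij' (fun k => (k + u) % n) (fun k => (k + (n - u)) % n)
    · intro a ha
      simp only [Finset.mem_range] at *
      exact Nat.mod_lt _ hn
    · intro a ha
      simp only [Finset.mem_range] at *
      exact Nat.mod_lt _ hn
    · intro a ha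
      simp only [Finset.mem_range] at ha
      rw [Nat.mod_add_mod]
      have : a + u + (n - u) = a + n := by omega
      rw [this, Nat.add_mod_right]
      exact Nat.mod_eq_of_lt ha
    · intro a ha
      simp only [Finset.mem_range] at ha
      rw [Nat.mod_add_mod]
      have : a + (n - u) + u = a + n := by omega
      rw [this, Nat.add_mod_right]
      exact Nat.mod_eq_of_lt ha
    · intro a ha
      rfl
  have hprod : ∏ k ∈ Finset.range n, f k = 1 := by
    calc ∏ k ∈ Finset.range n, f k
        = (∏ k ∈ Finset.range n, A k) * (∏ k ∈ Finset.range n, A ((k + u) % n)) :=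
          Finset.prod_mul_distrib
      _ = (∏ k ∈ Finset.range n, A k) * (∏ k ∈ Finset.range n, A k) := by rw [hb]
      _ = ∏ k ∈ Finset.range n, (A k * A k) := Finset.prod_mul_distrib.symm
      _ = 1 := Finset.prod_eq_one (fun k hk => by
            rcases hA k (Finset.mem_range.mp hk) with h | h <;> rw [h] <;> norm_num)
  set s := (Finset.range n).filter (fun k => f k = -1) with hs
  have h1 : ∑ k ∈ s, f k = -(s.card : ℤ) := by
    rw [Finset.sum_congr rfl (fun k hk => (Finset.mem_filter.mp hk).2)]
    simp [hs]
  have h2 : ∑ k ∈ (Finset.range n).filter (fun k => ¬ f k = -1), f k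
      = (((Finset.range n).filter (fun k => ¬ f k = -1)).card : ℤ) := by
    have hone : ∀ k ∈ (Finset.range n).filter (fun k => ¬ f k = -1), f k = 1 := by
      intro k hk
      have ht := hterm k (Finset.mem_filter.mp hk).1
      have h' := (Finset.mem_filter.mp hk).2
      tauto
    rw [Finset.sum_congr rfl hone]
    simp
  have h3 : s.card + ((Finset.range n).filter (fun k => ¬ f k = -1)).card = n := by
    rw [hs, Finset.card_filter_add_card_filter_not]
    simp
  have hcard : ∑ k ∈ Finset.range n, f k = (n : ℤ) - 2 * s.card := by
    rw [← Finset.sum_filter_add_sum_filter_not (Finset.range n) (fun k => f k = -1) f,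
      h1, h2]
    push_cast at h3 ⊢
    linarith
  have hevenc : Even s.card := by
    have hps : ∏ k ∈ s, f k = (-1:ℤ) ^ s.card := by
      rw [Finset.prod_congr rfl (fun k hk => (Finset.mem_filter.mp hk).2),
        Finset.prod_const]
    have hpn : ∏ k ∈ (Finset.range n).filter (fun k => ¬ f k = -1), f k = 1 :=
      Finset.prod_eq_one (fun k hk => by
        have ht := hterm k (Finset.mem_filter.mp hk).1
        have h' := (Finset.mem_filter.mp hk).2
        tauto)
    have hsplit := Finset.prod_filter_mul_prod_filter_not (Finset.range n)
      (fun k => f k = -1) f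
    rw [hps, hpn, mul_one, hprod] at hsplit
    exact (neg_one_pow_eq_one_iff_even (by norm_num : (-1:ℤ) ≠ 1)).mp hsplit
  obtain ⟨c, hc⟩ := hevenc
  rw [hcard, hc]
  ring_nf
  omega

theorem barker_even_length_perfect (n : ℕ) (heven : Even n) (hn : 2 < n) (A : ℕ → ℤ)
    (hA : ∀ k < n, A k = 1 ∨ A k = -1)
    (hbarker : ∀ u, 0 < u → u < n →
      |∑ k ∈ Finset.range (n - u), A k * A (k + u)| ≤ 1) :
    (∀ u, 0 < u → u < n →
      (∑ k ∈ Finset.range (n - u), A k * A (k + u)) +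
        (∑ k ∈ Finset.range (n - (n - u)), A k * A (k + (n - u))) = 0) ∧
    4 ∣ n := by
  obtain ⟨m, hm⟩ := heven
  have h4 : 4 ∣ n := by
    have hC2 : (∑ k ∈ Finset.range (n - 2), A k * A (k + 2)) = 0 := by
      have hp := aux_parity n 2 A hA (by omega)
      have hb := hbarker 2 (by norm_num) (by omega)
      rw [abs_le] at hb
      omega
    have hC2' : (∑ k ∈ Finset.range (n - (n - 2)), A k * A (k + (n - 2))) = 0 := by
      have hp := aux_parity n (n - 2) A hA (by omega)
      have hb := hbarker (n - 2) (by omega) (by omega)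
      rw [abs_le] at hb
      omega
    have hR := aux_R n 2 A (by norm_num) (by omega)
    rw [hC2, hC2'] at hR
    have hm4 := aux_mod4 n 2 A hA (by omega) (by omega)
    rw [← hR] at hm4
    omega
  refine ⟨?_, h4⟩
  intro u hu0 hun
  have hR := aux_R n u A hu0 hun
  have hm4 := aux_mod4 n u A hA (by omega) hun
  rw [← hR] at hm4
  have hb1 := hbarker u hu0 hun
  have hb2 := hbarker (n - u) (by omega) (by omega)
  rw [abs_le] at hb1 hb2
  omega
end

section
/- For sequences A and B of coprime lengths n₁ and n₂, the entrywise product sequence C of length n₁n₂ defined by C(k) = A(k mod n₁)·B(k mod n₂) satisfies R_u(C) = R_u(A)·R_u(B) for every u. In particular, if A and B are perfect, then C is perfect. -/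
open Finset Complex

theorem product_sequence_autocorrelation (n₁ n₂ : ℕ) (h1 : 0 < n₁) (h2 : 0 < n₂)
    (hcop : Nat.Coprime n₁ n₂) (A B : ℕ → ℂ) :
    let C : ℕ → ℂ := fun k => A (k % n₁) * B (k % n₂)
    let RA : ℕ → ℂ := fun u =>
      ∑ k ∈ Finset.range n₁, A k * (starRingEnd ℂ) (A ((k + u) % n₁))
    let RB : ℕ → ℂ := fun u =>
      ∑ k ∈ Finset.range n₂, B k * (starRingEnd ℂ) (B ((k + u) % n₂))
    let RC : ℕ → ℂ := fun u =>
      ∑ k ∈ Finset.range (n₁ * n₂), C k * (starRingEnd ℂ) (C ((k + u) % (n₁ * n₂)))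
    (∀ u, RC u = RA u * RB u) ∧
    ((∀ u, 0 < u → u < n₁ → RA u = 0) → (∀ u, 0 < u → u < n₂ → RB u = 0) →
      ∀ u, 0 < u → u < n₁ * n₂ → RC u = 0) := by
  intro C RA RB RC
  have hn : 0 < n₁ * n₂ := Nat.mul_pos h1 h2
  have key : ∀ u, RC u = RA u * RB u := by
    intro u
    have step1 : RC u = ∑ k ∈ Finset.range (n₁ * n₂),
        (A (k % n₁) * (starRingEnd ℂ) (A ((k % n₁ + u) % n₁))) *
        (B (k % n₂) * (starRingEnd ℂ) (B ((k % n₂ + u) % n₂))) := by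
      apply Finset.sum_congr rfl
      intro k _
      have e1 : (k + u) % (n₁ * n₂) % n₁ = (k % n₁ + u) % n₁ := by
        rw [Nat.mod_mod_of_dvd _ ⟨n₂, rfl⟩, Nat.mod_add_mod]
      have e2 : (k + u) % (n₁ * n₂) % n₂ = (k % n₂ + u) % n₂ := by
        rw [Nat.mod_mod_of_dvd _ ⟨n₁, (mul_comm n₁ n₂)⟩, Nat.mod_add_mod]
      simp only [C, e1, e2, map_mul]
      ring
    have step2 : ∑ k ∈ Finset.range (n₁ * n₂),
        (A (k % n₁) * (starRingEnd ℂ) (A ((k % n₁ + u) % n₁))) *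
        (B (k % n₂) * (starRingEnd ℂ) (B ((k % n₂ + u) % n₂)))
        = ∑ p ∈ Finset.range n₁ ×ˢ Finset.range n₂,
        (A p.1 * (starRingEnd ℂ) (A ((p.1 + u) % n₁))) *
        (B p.2 * (starRingEnd ℂ) (B ((p.2 + u) % n₂))) := by
      refine Finset.sum_nbij' (fun k => (k % n₁, k % n₂))
        (fun p => (Nat.chineseRemainder hcop p.1 p.2 : ℕ) % (n₁ * n₂))
        ?_ ?_ ?_ ?_ ?_
      · intro k _
        simp [Finset.mem_product, Nat.mod_lt _ h1, Nat.mod_lt _ h2]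
      · intro p _
        simp [Nat.mod_lt _ hn]
      · intro k hk
        simp only
        set x := (Nat.chineseRemainder hcop (k % n₁) (k % n₂) : ℕ) with hx
        have h := (Nat.chineseRemainder hcop (k % n₁) (k % n₂)).2
        have hmod : x % (n₁ * n₂) = k % (n₁ * n₂) := by
          have : x ≡ k [MOD n₁ * n₂] := by
            rw [← Nat.modEq_and_modEq_iff_modEq_mul hcop]
            constructor
            · exact h.1.trans (Nat.mod_modEq k n₁)
            · exact h.2.trans (Nat.mod_modEq k n₂)
          exact this
        rw [hmod, Nat.mod_eq_of_lt (Finset.mem_range.mp hk)]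
      · intro p hp
        simp only [Finset.mem_product, Finset.mem_range] at hp
        set x := (Nat.chineseRemainder hcop p.1 p.2 : ℕ) with hx
        have h := (Nat.chineseRemainder hcop p.1 p.2).2
        have e1 : x % (n₁ * n₂) % n₁ = p.1 := by
          rw [Nat.mod_mod_of_dvd _ ⟨n₂, rfl⟩]
          rw [Nat.ModEq] at h
          rw [h.1, Nat.mod_eq_of_lt hp.1]
        have e2 : x % (n₁ * n₂) % n₂ = p.2 := by
          rw [Nat.mod_mod_of_dvd _ ⟨n₁, (mul_comm n₁ n₂)⟩]
          have := h.2
          rw [Nat.ModEq] at this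
          rw [this, Nat.mod_eq_of_lt hp.2]
        exact Prod.ext e1 e2
      · intro k _
        rfl
    rw [step1, step2, Finset.sum_product]
    simp only [RA, RB, Finset.sum_mul_sum]
  refine ⟨key, ?_⟩
  intro hA hB u hu hun
  rw [key u]
  have hAper : RA u = RA (u % n₁) := by
    apply Finset.sum_congr rfl
    intro k _
    have h := (Nat.mod_modEq u n₁).add_left k
    rw [Nat.ModEq] at h
    rw [← h]
  have hBper : RB u = RB (u % n₂) := by
    apply Finset.sum_congr rfl
    intro k _
    have h := (Nat.mod_modEq u n₂).add_left k
    rw [Nat.ModEq] at h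
    rw [← h]
  by_cases hu1 : u % n₁ = 0
  · by_cases hu2 : u % n₂ = 0
    · exfalso
      have : n₁ * n₂ ∣ u := (Nat.Coprime.mul_dvd_of_dvd_of_dvd hcop
        (Nat.dvd_of_mod_eq_zero hu1) (Nat.dvd_of_mod_eq_zero hu2))
      have := Nat.le_of_dvd hu this
      omega
    · rw [hBper, hB (u % n₂) (Nat.pos_of_ne_zero hu2) (Nat.mod_lt _ h2), mul_zero]
  · rw [hAper, hA (u % n₁) (Nat.pos_of_ne_zero hu1) (Nat.mod_lt _ h1), zero_mul]
end

section
/- The Frank sequence of length m² is a perfect m-phase sequence: for the sequence A of length m² defined by A(j + km) = exp(2πi·jk/m) for 0 ≤ j,k < m, all nontrivial periodic autocorrelations vanish: R_u(A) = 0 for 0 < u < m². -/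
open Finset Complex Real

noncomputable def ee (x : ℂ) : ℂ := Complex.exp (2 * Real.pi * Complex.I * x)

lemma ee_add (x y : ℂ) : ee (x + y) = ee x * ee y := by
  simp [ee, mul_add, Complex.exp_add]

lemma ee_int (k : ℤ) : ee k = 1 := by
  rw [ee, show 2*(π:ℂ)*I*k = k*(2*π*I) by ring, Complex.exp_int_mul_two_pi_mul_I]

lemma ee_nat (k : ℕ) : ee k = 1 := by
  have := ee_int k; simpa using this

lemma conj_ee (x : ℂ) (hx : (starRingEnd ℂ) x = x) : (starRingEnd ℂ) (ee x) = ee (-x) := by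
  rw [ee, ee, ← Complex.exp_conj]
  congr 1
  simp only [map_mul, Complex.conj_I, hx, Complex.conj_ofReal, map_ofNat]
  ring

lemma sum_ee_zero (m : ℕ) (c : ℤ) (h : ¬ (m:ℤ) ∣ c) :
    ∑ k ∈ range m, ee ((c : ℂ) * k / m) = 0 := by
  rcases Nat.eq_zero_or_pos m with hm | hm
  · subst hm; simp
  have hm' : (m : ℂ) ≠ 0 := Nat.cast_ne_zero.mpr hm.ne'
  set ζ : ℂ := ee ((c:ℂ)/m) with hζ
  have hpow : ∀ k : ℕ, ee ((c:ℂ) * k / m) = ζ ^ k := by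
    intro k
    rw [hζ, ee, ee, ← Complex.exp_nat_mul]
    congr 1
    ring
  have hζm : ζ ^ m = 1 := by
    rw [← hpow m]
    rw [show (c:ℂ) * m / m = (c:ℤ) by field_simp]
    exact ee_int c
  have hζ1 : ζ ≠ 1 := by
    intro h1
    rw [hζ, ee, Complex.exp_eq_one_iff] at h1
    obtain ⟨n, hn⟩ := h1
    apply h
    refine ⟨n, ?_⟩
    have h2 : (2*π*I : ℂ) ≠ 0 := by
      simp [Real.pi_ne_zero, Complex.I_ne_zero, Complex.ext_iff, Real.pi_ne_zero]
    have h3 : (2*π*I : ℂ) * ((c:ℂ)/m) = (2*π*I) * n := by rw [hn]; ring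
    have h4 : (c:ℂ)/m = n := mul_left_cancel₀ h2 h3
    have h5 : (c:ℂ) = m * n := by field_simp at h4; linear_combination h4
    exact_mod_cast h5
  calc ∑ k ∈ range m, ee ((c : ℂ) * k / m) = ∑ k ∈ range m, ζ ^ k := by
        simp [hpow]
    _ = (ζ ^ m - 1) / (ζ - 1) := geom_sum_eq hζ1 m
    _ = 0 := by rw [hζm]; simp

lemma mod_div_of (m a b : ℕ) (hm : 0 < m) (hb : b < m) :
    (a*m+b) % m = b ∧ (a*m+b) / m = a := by
  rw [add_comm, Nat.add_mul_mod_self_right, Nat.add_mul_div_right _ _ hm,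
    Nat.mod_eq_of_lt hb, Nat.div_eq_of_lt hb]
  omega

lemma sum_sq_reindex (m : ℕ) (f : ℕ → ℂ) (hm : 0 < m) :
    ∑ t ∈ range (m*m), f t = ∑ j ∈ range m, ∑ k ∈ range m, f (k*m+j) := by
  rw [← Finset.sum_product']
  apply Finset.sum_nbij' (i := fun t => (t % m, t / m)) (j := fun p => p.2*m+p.1)
  · intro t ht
    simp only [mem_range, mem_product] at *
    exact ⟨Nat.mod_lt _ hm, Nat.div_lt_iff_lt_mul hm |>.mpr ht⟩
  · rintro ⟨j, k⟩ hp
    simp only [mem_range, mem_product] at *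
    calc k*m+j < k*m+m := by omega
      _ ≤ m*m := by nlinarith [hp.2]
  · intro t ht; simp only; rw [mul_comm]; exact Nat.div_add_mod t m
  · rintro ⟨j, k⟩ hp
    simp only [mem_range, mem_product] at hp
    exact Prod.ext (mod_div_of m k j hm hp.1).1 (mod_div_of m k j hm hp.1).2
  · intro t ht; simp only; congr 1; rw [mul_comm]; exact (Nat.div_add_mod t m).symm

lemma mod_sq (m a b : ℕ) (hm : 0 < m) (hb : b < m) :
    (a*m+b) % (m*m) = (a % m)*m+b := by
  have h1 : a*m+b = (m*m)*(a/m) + ((a%m)*m+b) := by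
    have := Nat.div_add_mod a m; nlinarith
  have h2 : (a%m)*m+b < m*m := by
    have : a % m < m := Nat.mod_lt _ hm; nlinarith
  rw [h1, Nat.mul_add_mod, Nat.mod_eq_of_lt h2]

lemma ee_mod (m a b : ℕ) (hm : 0 < m) :
    ee ((a:ℂ) * ((b % m : ℕ):ℂ) / m) = ee ((a:ℂ)*(b:ℂ)/m) := by
  have hm' : (m : ℂ) ≠ 0 := Nat.cast_ne_zero.mpr hm.ne'
  have hb : (b:ℂ) = (m:ℂ)*((b/m : ℕ):ℂ) + ((b%m : ℕ):ℂ) := by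
    exact_mod_cast congrArg (Nat.cast : ℕ → ℂ) (Nat.div_add_mod b m).symm
  calc ee ((a:ℂ) * ((b % m : ℕ):ℂ) / m)
      = ee ((a:ℂ) * ((b % m : ℕ):ℂ) / m) * ee ((a*(b/m) : ℕ)) := by rw [ee_nat]; ring
    _ = ee ((a:ℂ) * ((b % m : ℕ):ℂ) / m + (a*(b/m) : ℕ)) := (ee_add _ _).symm
    _ = ee ((a:ℂ)*(b:ℂ)/m) := by
        congr 1
        rw [hb]
        push_cast
        field_simp
        ring

lemma A_val (m a b : ℕ) (hm : 0 < m) (hb : b < m) :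
    ee (((((a*m+b)%(m*m)) % m : ℕ) : ℂ) * ((((a*m+b)%(m*m)) / m : ℕ) : ℂ) / m)
      = ee ((b:ℂ)*(a:ℂ)/m) := by
  rw [mod_sq m a b hm hb, (mod_div_of m (a%m) b hm hb).1, (mod_div_of m (a%m) b hm hb).2]
  exact ee_mod m b a hm

lemma conj_nat_frac (a b : ℕ) (c : ℕ) :
    (starRingEnd ℂ) ((a:ℂ)*(b:ℂ)/(c:ℂ)) = (a:ℂ)*(b:ℂ)/(c:ℂ) := by
  rw [map_div₀, map_mul]
  simp

theorem frank_sequence_perfect (m : ℕ) (hm : 0 < m) :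
    let n := m ^ 2
    let A : ℕ → ℂ := fun t =>
      Complex.exp (2 * Real.pi * Complex.I * ((t % m : ℕ) * (t / m : ℕ) / m))
    ∀ u, 0 < u → u < n →
      (∑ t ∈ Finset.range n, A t * (starRingEnd ℂ) (A ((t + u) % n))) = 0 := by
  intro n A u hu0 hun
  have hm' : (m : ℂ) ≠ 0 := Nat.cast_ne_zero.mpr hm.ne'
  set v := u % m with hv
  set w := u / m with hw
  have hvm : v < m := Nat.mod_lt _ hm
  have hwm : w < m := by
    rw [hw]
    exact (Nat.div_lt_iff_lt_mul hm).mpr (by rw [← pow_two]; exact hun)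
  have huvw : u = w*m+v := by rw [hv, hw, mul_comm]; exact (Nat.div_add_mod u m).symm
  have hA : ∀ t, A t = ee (((t % m : ℕ) : ℂ) * ((t / m : ℕ) : ℂ) / m) := fun t => rfl
  have hAconj : ∀ a b : ℕ, b < m →
      (starRingEnd ℂ) (A ((a*m+b) % (m*m))) = ee (-((b:ℂ)*(a:ℂ)/m)) := by
    intro a b hb
    rw [hA, A_val m a b hm hb, conj_ee _ (conj_nat_frac b a m)]
  show ∑ t ∈ Finset.range (m^2), A t * (starRingEnd ℂ) (A ((t + u) % m^2)) = 0
  rw [pow_two, sum_sq_reindex m _ hm]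
  rcases Nat.eq_zero_or_pos v with hv0 | hv0
  · -- v = 0, w ≠ 0
    have hw0 : w ≠ 0 := by
      intro h0; rw [huvw, h0, hv0] at hu0; simp at hu0
    rw [Finset.sum_comm]
    apply Finset.sum_eq_zero
    intro k hk
    have key : ∀ j ∈ range m,
        A (k*m+j) * (starRingEnd ℂ) (A ((k*m+j + u) % (m*m))) =
          ee (((-(w:ℤ) : ℤ) : ℂ) * (j:ℂ) / m) := by
      intro j hj
      rw [mem_range] at hj
      have ht : k*m+j+u = (k+w)*m + j := by
        rw [huvw, hv0]
        ring
      rw [ht, hAconj (k+w) j hj, hA (k*m+j),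
        (mod_div_of m k j hm hj).1, (mod_div_of m k j hm hj).2, ← ee_add]
      congr 1
      push_cast
      field_simp
      ring
    rw [Finset.sum_congr rfl key]
    apply sum_ee_zero
    intro hd
    rw [dvd_neg, Int.natCast_dvd_natCast] at hd
    have := Nat.le_of_dvd (Nat.pos_of_ne_zero hw0) hd
    omega
  · -- v ≠ 0
    apply Finset.sum_eq_zero
    intro j hj
    rw [mem_range] at hj
    rcases lt_or_ge (j + v) m with hjv | hjv
    · -- no carry
      have key : ∀ k ∈ range m,
          A (k*m+j) * (starRingEnd ℂ) (A ((k*m+j + u) % (m*m))) =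
            ee (-(((j:ℂ)+(v:ℂ))*(w:ℂ))/m) * ee (((-(v:ℤ) : ℤ) : ℂ) * (k:ℂ) / m) := by
        intro k hk
        rw [mem_range] at hk
        have ht : k*m+j+u = (k+w)*m + (j+v) := by rw [huvw]; ring
        rw [ht, hAconj (k+w) (j+v) hjv, hA (k*m+j),
          (mod_div_of m k j hm hj).1, (mod_div_of m k j hm hj).2, ← ee_add, ← ee_add]
        congr 1
        push_cast
        field_simp
        ring
      rw [Finset.sum_congr rfl key, ← Finset.mul_sum, sum_ee_zero m (-(v:ℤ)), mul_zero]
      intro hd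
      rw [dvd_neg, Int.natCast_dvd_natCast] at hd
      have := Nat.le_of_dvd hv0 hd
      omega
    · -- carry
      have hb : j + v - m < m := by omega
      have key : ∀ k ∈ range m,
          A (k*m+j) * (starRingEnd ℂ) (A ((k*m+j + u) % (m*m))) =
            ee (-(((j:ℂ)+(v:ℂ)-(m:ℂ))*((w:ℂ)+1))/m) *
              ee ((((m:ℤ)-(v:ℤ) : ℤ) : ℂ) * (k:ℂ) / m) := by
        intro k hk
        rw [mem_range] at hk
        have hexp : (k+w+1)*m = k*m+w*m+m := by ring
        have ht : k*m+j+u = (k+w+1)*m + (j+v-m) := by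
          rw [huvw, hexp]; omega
        have hcast : ((j + v - m : ℕ) : ℂ) = (j:ℂ) + (v:ℂ) - (m:ℂ) := by
          have : (j + v - m : ℕ) + m = j + v := by omega
          have := congrArg (Nat.cast : ℕ → ℂ) this
          push_cast at this
          linear_combination this
        rw [ht, hAconj (k+w+1) (j+v-m) hb, hA (k*m+j),
          (mod_div_of m k j hm hj).1, (mod_div_of m k j hm hj).2, ← ee_add, ← ee_add]
        congr 1
        rw [hcast]
        push_cast
        field_simp
        ring
      rw [Finset.sum_congr rfl key, ← Finset.mul_sum, sum_ee_zero m ((m:ℤ)-(v:ℤ)), mul_zero]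
      intro hd
      have h1 : (0:ℤ) < (m:ℤ) - (v:ℤ) := by omega
      have := Int.le_of_dvd h1 hd
      omega
end

section
/- The Chu sequence of even length m, defined by A(k) = exp(πi·k²/m), is a perfect sequence: R_u(A) = 0 for all 0 < u < m. -/
open Finset Complex Real

theorem chu_sequence_perfect (m : ℕ) (hm : 0 < m) (heven : Even m) :
    let A : ℕ → ℂ := fun k => Complex.exp (Real.pi * Complex.I * (k ^ 2 : ℕ) / m)
    ∀ u, 0 < u → u < m →
      (∑ k ∈ Finset.range m, A k * (starRingEnd ℂ) (A ((k + u) % m))) = 0 := by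
  intro A u hu hum
  have hm0 : (m : ℂ) ≠ 0 := Nat.cast_ne_zero.mpr hm.ne'
  obtain ⟨s, hs⟩ := heven
  set ζ : ℂ := Complex.exp (-(2 * Real.pi * Complex.I * u / m)) with hζ
  -- Step 1: unfold mod using evenness
  have hmod : ∀ n : ℕ, A (n % m) = Complex.exp (Real.pi * Complex.I * (n ^ 2 : ℕ) / m) := by
    intro n
    have hn : n % m + m * (n / m) = n := Nat.mod_add_div n m
    set r := n % m with hr
    set q := n / m with hq
    have hnat : n ^ 2 = r ^ 2 + (q * r + s * q ^ 2) * (2 * m) := by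
      conv_lhs => rw [← hn]
      rw [hs]; ring
    have harg : (Real.pi : ℂ) * Complex.I * (n ^ 2 : ℕ) / m
        = Real.pi * Complex.I * (r ^ 2 : ℕ) / m
          + (q * r + s * q ^ 2 : ℕ) * (2 * Real.pi * Complex.I) := by
      rw [hnat]; push_cast; field_simp
    show Complex.exp _ = _
    rw [harg, Complex.exp_add, Complex.exp_nat_mul, Complex.exp_two_pi_mul_I, one_pow, mul_one]
  -- Step 2: each term equals C * ζ^k
  have hterm : ∀ k : ℕ, A k * (starRingEnd ℂ) (A ((k + u) % m))
      = Complex.exp (-(Real.pi * Complex.I * (u ^ 2 : ℕ) / m)) * ζ ^ k := by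
    intro k
    rw [hmod (k + u)]
    have hconj : (starRingEnd ℂ) (Complex.exp ((Real.pi : ℂ) * Complex.I * ((k + u) ^ 2 : ℕ) / m))
        = Complex.exp (-((Real.pi : ℂ) * Complex.I * ((k + u) ^ 2 : ℕ) / m)) := by
      rw [← Complex.exp_conj]
      congr 1
      simp [map_div₀, Complex.conj_I]
      ring
    rw [hconj, hζ, ← Complex.exp_nat_mul, ← Complex.exp_add, ← Complex.exp_add]
    congr 1
    push_cast
    field_simp
    ring
  rw [Finset.sum_congr rfl fun k _ => hterm k, ← Finset.mul_sum]
  have hζm : ζ ^ m = 1 := by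
    rw [hζ, ← Complex.exp_nat_mul]
    have h1 : (m : ℂ) * -(2 * Real.pi * Complex.I * u / m)
        = ((-(u : ℤ) : ℤ) : ℂ) * (2 * Real.pi * Complex.I) := by
      push_cast; field_simp
    rw [h1, Complex.exp_int_mul_two_pi_mul_I]
  have hζ1 : ζ ≠ 1 := by
    intro h
    rw [hζ, Complex.exp_eq_one_iff] at h
    obtain ⟨n, hn⟩ := h
    have hπ : (Real.pi : ℂ) ≠ 0 := Complex.ofReal_ne_zero.mpr Real.pi_ne_zero
    have hI : Complex.I ≠ 0 := Complex.I_ne_zero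
    field_simp at hn
    have h2 : (2 * (Real.pi : ℂ) * Complex.I) * (-(u : ℂ)) = (2 * (Real.pi : ℂ) * Complex.I) * ((n : ℂ) * m) := by
      linear_combination (2 * (Real.pi : ℂ) * Complex.I) * hn
    have hne : (2 * (Real.pi : ℂ) * Complex.I) ≠ 0 := by
      exact mul_ne_zero (mul_ne_zero two_ne_zero hπ) hI
    have h3 : (-(u : ℂ)) = (n : ℂ) * m := mul_left_cancel₀ hne h2
    have key2 : (n * m : ℤ) = -(u : ℤ) := by exact_mod_cast h3.symm
    rcases le_or_gt 0 n with h0 | h0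
    · nlinarith [key2, (Int.ofNat_lt.mpr hu : (0:ℤ) < u), mul_nonneg h0 (Int.ofNat_le.mpr hm.le : (0:ℤ) ≤ m)]
    · have hn1 : n ≤ -1 := by omega
      have : n * m ≤ -1 * m := by
        apply mul_le_mul_of_nonneg_right hn1
        exact_mod_cast hm.le
      have hum' : (u : ℤ) < m := by exact_mod_cast hum
      omega
  have hsum : ∑ k ∈ Finset.range m, ζ ^ k = 0 := by
    rw [geom_sum_eq hζ1 m, hζm]
    simp
  rw [hsum, mul_zero]
end

section
/- If p is an odd prime and A, B ∈ ℤ[z] are polynomials such that A(z)·A(z⁻¹) + B(z)·B(z⁻¹) ≡ 0 (mod p) as Laurent polynomials in ℤ[z, z⁻¹], and A, B are not both zero modulo p, then p ≡ 1 (mod 4). -/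
open Polynomial LaurentPolynomial

private lemma my_eval_one_reverse {R : Type*} [CommSemiring R] (f : R[X]) :
    f.reverse.eval 1 = f.eval 1 := by
  letI : Invertible (1 : R) := invertibleOne
  have h := Polynomial.eval₂_reverse_mul_pow (RingHom.id R) 1 f
  simpa [Polynomial.eval₂_eq_eval_map] using h

private lemma my_reverse_pow {R : Type*} [CommRing R] [NoZeroDivisors R] (f : R[X]) (k : ℕ) :
    (f ^ k).reverse = f.reverse ^ k := by
  induction k with
  | zero => simpa using Polynomial.reverse_C (1 : R)
  | succ n ih => rw [pow_succ, Polynomial.reverse_mul_of_domain, ih, pow_succ]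

private lemma my_reverse_X_sub_one {R : Type*} [CommRing R] [Nontrivial R] :
    (X - Polynomial.C (1 : R)).reverse = -(X - Polynomial.C 1) := by
  unfold Polynomial.reverse
  rw [natDegree_X_sub_C, reflect_sub]
  have h1 : reflect 1 (X : R[X]) = 1 := by
    simpa using reflect_monomial 1 1 (R := R)
  have h2 : reflect 1 (Polynomial.C (1 : R)) = Polynomial.C 1 * X := by
    simpa using reflect_C (1 : R) 1
  rw [h1, h2, map_one]
  ring

private lemma aux_sq (p : ℕ) [Fact p.Prime] (a b : Polynomial (ZMod p))
    (ha : a ≠ 0) (hb : b ≠ 0) (m n : ℕ)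
    (key : a * a.reverse * X ^ m + b * b.reverse * X ^ n = 0)
    (hkl : rootMultiplicity 1 a ≤ rootMultiplicity 1 b) :
    IsSquare (-1 : ZMod p) := by
  set k := rootMultiplicity 1 a with hk
  set l := rootMultiplicity 1 b with hl
  set a₁ := a /ₘ (X - Polynomial.C 1) ^ k with ha₁
  set b₁ := b /ₘ (X - Polynomial.C 1) ^ l with hb₁
  have hfa : (X - Polynomial.C 1) ^ k * a₁ = a := pow_mul_divByMonic_rootMultiplicity_eq a 1
  have hfb : (X - Polynomial.C 1) ^ l * b₁ = b := pow_mul_divByMonic_rootMultiplicity_eq b 1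
  have hea : a₁.eval 1 ≠ 0 := eval_divByMonic_pow_rootMultiplicity_ne_zero 1 ha
  have heb : b₁.eval 1 ≠ 0 := eval_divByMonic_pow_rootMultiplicity_ne_zero 1 hb
  have hra : a.reverse = (-1) ^ k * (X - Polynomial.C 1) ^ k * a₁.reverse := by
    rw [← hfa, Polynomial.reverse_mul_of_domain, my_reverse_pow, my_reverse_X_sub_one, neg_pow]
  have hrb : b.reverse = (-1) ^ l * (X - Polynomial.C 1) ^ l * b₁.reverse := by
    rw [← hfb, Polynomial.reverse_mul_of_domain, my_reverse_pow, my_reverse_X_sub_one, neg_pow]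
  obtain ⟨d, hd⟩ : ∃ d, l = k + d := ⟨l - k, by omega⟩
  have key2 : (X - Polynomial.C 1) ^ (2 * k) *
      ((-1 : Polynomial (ZMod p)) ^ k * (a₁ * a₁.reverse) * X ^ m +
       (-1 : Polynomial (ZMod p)) ^ l * (X - Polynomial.C 1) ^ (2 * d) * (b₁ * b₁.reverse) * X ^ n) = 0 := by
    rw [← key, hra, hrb, ← hfa, ← hfb, hd]
    ring
  have hXne : (X - Polynomial.C (1 : ZMod p)) ^ (2 * k) ≠ 0 :=
    pow_ne_zero _ (Polynomial.X_sub_C_ne_zero 1)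
  have key3 : (-1 : Polynomial (ZMod p)) ^ k * (a₁ * a₁.reverse) * X ^ m +
       (-1 : Polynomial (ZMod p)) ^ l * (X - Polynomial.C 1) ^ (2 * d) * (b₁ * b₁.reverse) * X ^ n = 0 :=
    (mul_eq_zero.mp key2).resolve_left hXne
  have keval := congrArg (Polynomial.eval (1 : ZMod p)) key3
  simp only [eval_add, eval_mul, eval_pow, eval_neg, eval_one, eval_X, eval_sub, Polynomial.eval_C,
    sub_self, one_pow, mul_one, eval_zero, my_eval_one_reverse] at keval
  rcases Nat.eq_zero_or_pos d with hd0 | hd0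
  · have hlk : l = k := by omega
    rw [hd0, hlk] at keval
    simp only [Nat.mul_zero, pow_zero, mul_one] at keval
    have hu : ((-1 : ZMod p)) ^ k ≠ 0 := pow_ne_zero _ (neg_ne_zero.mpr one_ne_zero)
    have keval' : a₁.eval 1 * a₁.eval 1 = -(b₁.eval 1 * b₁.eval 1) := by
      have h : ((-1 : ZMod p)) ^ k * (a₁.eval 1 * a₁.eval 1 + b₁.eval 1 * b₁.eval 1) = 0 := by
        linear_combination keval
      have h2 := (mul_eq_zero.mp h).resolve_left hu
      linear_combination h2
    refine ⟨a₁.eval 1 * (b₁.eval 1)⁻¹, ?_⟩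
    field_simp
    linear_combination -keval'
  · exfalso
    have h0 : ((0 : ZMod p)) ^ (2 * d) = 0 := by
      apply zero_pow; omega
    rw [h0] at keval
    simp only [mul_zero, zero_mul, add_zero] at keval
    rcases mul_eq_zero.mp keval with h | h
    · exact pow_ne_zero k (neg_ne_zero.mpr (one_ne_zero (α := ZMod p))) h
    · exact hea (mul_self_eq_zero.mp h)

theorem eliahou_kervaire_saffari (p : ℕ) (hp : p.Prime) (hodd : Odd p)
    (A B : Polynomial ℤ)
    (hAB : (A.map (Int.castRingHom (ZMod p))).toLaurent *
        LaurentPolynomial.invert ((A.map (Int.castRingHom (ZMod p))).toLaurent) +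
      (B.map (Int.castRingHom (ZMod p))).toLaurent *
        LaurentPolynomial.invert ((B.map (Int.castRingHom (ZMod p))).toLaurent) = 0)
    (hnz : ¬(A.map (Int.castRingHom (ZMod p)) = 0 ∧ B.map (Int.castRingHom (ZMod p)) = 0)) :
    p % 4 = 1 := by
  haveI : Fact p.Prime := ⟨hp⟩
  set a := A.map (Int.castRingHom (ZMod p)) with hadef
  set b := B.map (Int.castRingHom (ZMod p)) with hbdef
  set n := a.natDegree
  set m := b.natDegree
  -- transfer the Laurent identity to a polynomial identity
  have key0 : (a.toLaurent * invert a.toLaurent + b.toLaurent * invert b.toLaurent) *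
      (T n * T m) = 0 := by rw [hAB, zero_mul]
  have key1 : Polynomial.toLaurent (a * a.reverse * X ^ m + b * b.reverse * X ^ n) = 0 := by
    rw [map_add, map_mul, map_mul, map_mul, map_mul, toLaurent_reverse, toLaurent_reverse,
      Polynomial.toLaurent_X_pow, Polynomial.toLaurent_X_pow, ← key0]
    ring
  have key : a * a.reverse * X ^ m + b * b.reverse * X ^ n = 0 := by
    apply Polynomial.toLaurent_injective
    rw [key1, map_zero]
  -- both are nonzero
  have hXm : (X : Polynomial (ZMod p)) ^ m ≠ 0 := pow_ne_zero _ X_ne_zero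
  have hXn : (X : Polynomial (ZMod p)) ^ n ≠ 0 := pow_ne_zero _ X_ne_zero
  have hane : a ≠ 0 := by
    intro h0
    apply hnz
    refine ⟨h0, ?_⟩
    rw [h0] at key
    simp only [zero_mul, mul_zero, zero_add] at key
    rcases mul_eq_zero.mp key with h | h
    · rcases mul_eq_zero.mp h with h' | h'
      · exact h'
      · exact Polynomial.reverse_eq_zero.mp h'
    · exact absurd h hXn
  have hbne : b ≠ 0 := by
    intro h0
    apply hnz
    refine ⟨?_, h0⟩
    rw [h0] at key
    simp only [zero_mul, mul_zero, add_zero] at key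
    rcases mul_eq_zero.mp key with h | h
    · rcases mul_eq_zero.mp h with h' | h'
      · exact h'
      · exact Polynomial.reverse_eq_zero.mp h'
    · exact absurd h hXm
  -- get that -1 is a square mod p
  have hsq : IsSquare (-1 : ZMod p) := by
    rcases le_total (rootMultiplicity 1 a) (rootMultiplicity 1 b) with h | h
    · exact aux_sq p a b hane hbne m n key h
    · exact aux_sq p b a hbne hane n m (by rw [← key]; ring) h
  have h3 : p % 4 ≠ 3 := ZMod.exists_sq_eq_neg_one_iff.mp hsq
  obtain ⟨t, ht⟩ := hodd
  omega
end

section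
/- If (A, B) is a binary Golay pair of length n > 1 (i.e., C_u(A) + C_u(B) = 0 for all 0 < u < n), then n is even. -/
open Finset

lemma golay_aux_mid (a b c d : ℤ) (ha : a = 1 ∨ a = -1) (hb : b = 1 ∨ b = -1)
    (hc : c = 1 ∨ c = -1) (hd : d = 1 ∨ d = -1) (h : a * b * (c * d) = -1) :
    a * b + c * d = 0 := by
  obtain rfl | rfl := ha <;> obtain rfl | rfl := hb <;> obtain rfl | rfl := hc <;>
    obtain rfl | rfl := hd <;> revert h <;> norm_num

lemma golay_aux_sign (a b c d : ℤ) (ha : a = 1 ∨ a = -1) (hb : b = 1 ∨ b = -1)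
    (hc : c = 1 ∨ c = -1) (hd : d = 1 ∨ d = -1) (h : a * b * (c * d) ≠ -1) :
    a * b * (c * d) = 1 := by
  obtain rfl | rfl := ha <;> obtain rfl | rfl := hb <;> obtain rfl | rfl := hc <;>
    obtain rfl | rfl := hd <;> revert h <;> norm_num

lemma golay_aux_pair (a a' b b' c c' d d' : ℤ)
    (ha : a = 1 ∨ a = -1) (ha' : a' = 1 ∨ a' = -1) (hb : b = 1 ∨ b = -1)
    (hb' : b' = 1 ∨ b' = -1) (hc : c = 1 ∨ c = -1) (hc' : c' = 1 ∨ c' = -1)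
    (hd : d = 1 ∨ d = -1) (hd' : d' = 1 ∨ d' = -1)
    (h1 : a * a' * (b * b') = -1) (h2 : c * c' * (d * d') = -1) :
    (4 : ℤ) ∣ (a * c' + b * d') + (c * a' + d * b') := by
  obtain rfl | rfl := ha <;> obtain rfl | rfl := ha' <;> obtain rfl | rfl := hb <;>
    obtain rfl | rfl := hb' <;> obtain rfl | rfl := hc <;> obtain rfl | rfl := hc' <;>
    obtain rfl | rfl := hd <;> obtain rfl | rfl := hd' <;> revert h1 h2 <;> norm_num

lemma golay_aux_ends (a a' b b' c c' d d' : ℤ)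
    (ha : a = 1 ∨ a = -1) (ha' : a' = 1 ∨ a' = -1) (hb : b = 1 ∨ b = -1)
    (hb' : b' = 1 ∨ b' = -1) (hc : c = 1 ∨ c = -1) (hc' : c' = 1 ∨ c' = -1)
    (hd : d = 1 ∨ d = -1) (hd' : d' = 1 ∨ d' = -1)
    (h1 : a * a' * (b * b') = -1) (h2 : c * c' * (d * d') = 1) :
    ¬ (4 : ℤ) ∣ (a * c' + b * d') + (c * a' + d * b') := by
  obtain rfl | rfl := ha <;> obtain rfl | rfl := ha' <;> obtain rfl | rfl := hb <;>
    obtain rfl | rfl := hb' <;> obtain rfl | rfl := hc <;> obtain rfl | rfl := hc' <;>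
    obtain rfl | rfl := hd <;> obtain rfl | rfl := hd' <;> revert h1 h2 <;> norm_num

lemma golay_aux_end0 (a a' b b' : ℤ)
    (ha : a = 1 ∨ a = -1) (ha' : a' = 1 ∨ a' = -1) (hb : b = 1 ∨ b = -1)
    (hb' : b' = 1 ∨ b' = -1) (h : a * a' * (b * b') = 1) :
    a * a' + b * b' ≠ 0 := by
  obtain rfl | rfl := ha <;> obtain rfl | rfl := ha' <;> obtain rfl | rfl := hb <;>
    obtain rfl | rfl := hb' <;> revert h <;> norm_num

theorem binary_golay_pair_even_length (n : ℕ) (hn : 1 < n) (A B : ℕ → ℤ)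
    (hA : ∀ k < n, A k = 1 ∨ A k = -1) (hB : ∀ k < n, B k = 1 ∨ B k = -1)
    (hgolay : ∀ u, 0 < u → u < n →
      (∑ k ∈ Finset.range (n - u), A k * A (k + u)) +
        (∑ k ∈ Finset.range (n - u), B k * B (k + u)) = 0) :
    Even n := by
  -- the key correlation-at-index-pair function
  set c : ℕ → ℕ → ℤ := fun j k =>
    A k * A (n - 1 - (j - k)) + B k * B (n - 1 - (j - k)) with hc
  have key : ∀ j, j < n - 1 → A j * A (n - 1 - j) * (B j * B (n - 1 - j)) = -1 := by
    intro j
    induction j using Nat.strong_induction_on with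
    | _ j IH =>
      intro hj
      -- the correlation sum at shift u = n-1-j
      have hu1 : 0 < n - 1 - j := by omega
      have hu2 : n - 1 - j < n := by omega
      have hS0 := hgolay (n - 1 - j) hu1 hu2
      rw [show n - (n - 1 - j) = j + 1 by omega, ← Finset.sum_add_distrib] at hS0
      have hS : ∑ k ∈ Finset.range (j + 1), c j k = 0 := by
        rw [← hS0]
        refine Finset.sum_congr rfl fun k hk => ?_
        have hk' : k ≤ j := Nat.lt_succ_iff.mp (Finset.mem_range.mp hk)
        rw [show k + (n - 1 - j) = n - 1 - (j - k) by omega]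
      by_contra hPj
      have hPj1 : A j * A (n - 1 - j) * (B j * B (n - 1 - j)) = 1 :=
        golay_aux_sign _ _ _ _ (hA j (by omega)) (hA _ (by omega))
          (hB j (by omega)) (hB _ (by omega)) hPj
      rcases Nat.eq_zero_or_pos j with rfl | hjpos
      · rw [Finset.sum_range_one] at hS
        simp only [hc, Nat.sub_zero] at hS
        exact golay_aux_end0 _ _ _ _ (hA 0 (by omega)) (hA _ (by omega))
          (hB 0 (by omega)) (hB _ (by omega))
          (by simpa using hPj1) hS
      · obtain ⟨m, rfl⟩ : ∃ m, j = m + 1 := ⟨j - 1, by omega⟩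
        rw [Finset.sum_range_succ, Finset.sum_range_succ'] at hS
        -- hS : ∑ k ∈ range m, c (m+1) (k+1) + c (m+1) 0 + c (m+1) (m+1) = 0
        -- middle sum vanishes mod 4
        have hmid : ((∑ k ∈ Finset.range m, c (m + 1) (k + 1) : ℤ) : ZMod 4) = 0 := by
          push_cast
          refine Finset.sum_involution (fun a _ => m - 1 - a) (fun a ha => ?_)
            (fun a ha hfa => ?_) (fun a ha => ?_) (fun a ha => ?_)
          · -- pair sum divisible by 4
            have ham : a < m := Finset.mem_range.mp ha
            rw [show m - 1 - a + 1 = m - a by omega]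
            have h4 : (4 : ℤ) ∣ c (m + 1) (a + 1) + c (m + 1) (m - a) := by
              rcases eq_or_ne (a + 1) (m - a) with heq | hne
              · rw [← heq]
                have h0 : c (m + 1) (a + 1) = 0 := by
                  simp only [hc]
                  rw [show m + 1 - (a + 1) = a + 1 by omega]
                  exact golay_aux_mid _ _ _ _ (hA _ (by omega)) (hA _ (by omega))
                    (hB _ (by omega)) (hB _ (by omega)) (IH (a + 1) (by omega) (by omega))
                rw [h0]; norm_num
              · simp only [hc]
                rw [show m + 1 - (a + 1) = m - a by omega,
                  show m + 1 - (m - a) = a + 1 by omega]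
                exact golay_aux_pair _ _ _ _ _ _ _ _
                  (hA _ (by omega)) (hA _ (by omega)) (hB _ (by omega)) (hB _ (by omega))
                  (hA _ (by omega)) (hA _ (by omega)) (hB _ (by omega)) (hB _ (by omega))
                  (IH (a + 1) (by omega) (by omega)) (IH (m - a) (by omega) (by omega))
            have := (ZMod.intCast_zmod_eq_zero_iff_dvd
              (c (m + 1) (a + 1) + c (m + 1) (m - a)) 4).mpr h4
            push_cast at this
            exact this
          · -- if fixed point then value is 0
            intro hga
            apply hfa
            have ham : a < m := Finset.mem_range.mp ha
            have hga' : m - 1 - a = a := hga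
            have heq : a + 1 = m - a := by omega
            have h0 : c (m + 1) (a + 1) = 0 := by
              simp only [hc]
              rw [show m + 1 - (a + 1) = a + 1 by omega]
              exact golay_aux_mid _ _ _ _ (hA _ (by omega)) (hA _ (by omega))
                (hB _ (by omega)) (hB _ (by omega)) (IH (a + 1) (by omega) (by omega))
            rw [h0]; norm_num
          · have := Finset.mem_range.mp ha
            exact Finset.mem_range.mpr (show m - 1 - a < m by omega)
          · have := Finset.mem_range.mp ha
            show m - 1 - (m - 1 - a) = a
            omega
        -- so c 0 + c (m+1) is divisible by 4
        have hends : (4 : ℤ) ∣ c (m + 1) 0 + c (m + 1) (m + 1) := by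
          have hcast0 : ((c (m + 1) 0 + c (m + 1) (m + 1) : ℤ) : ZMod 4) = 0 := by
            have hcast := congrArg (fun x : ℤ => (x : ZMod 4)) hS
            push_cast at hcast hmid ⊢
            rw [hmid] at hcast
            linear_combination hcast
          have h4 := (ZMod.intCast_zmod_eq_zero_iff_dvd _ 4).mp hcast0
          exact_mod_cast h4
        -- but the ends lemma forbids it
        refine golay_aux_ends (A 0) (A (n - 1)) (B 0) (B (n - 1))
          (A (m + 1)) (A (n - 1 - (m + 1))) (B (m + 1)) (B (n - 1 - (m + 1)))
          (hA 0 (by omega)) (hA _ (by omega)) (hB 0 (by omega)) (hB _ (by omega))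
          (hA _ (by omega)) (hA _ (by omega)) (hB _ (by omega)) (hB _ (by omega))
          ?_ hPj1 ?_
        · have h0 := IH 0 (by omega) (by omega)
          simpa using h0
        · have e0 : c (m + 1) 0 = A 0 * A (n - 1 - (m + 1)) + B 0 * B (n - 1 - (m + 1)) := by
            simp only [hc, Nat.sub_zero]
          have e1 : c (m + 1) (m + 1) = A (m + 1) * A (n - 1) + B (m + 1) * B (n - 1) := by
            simp only [hc, Nat.sub_self, Nat.sub_zero]
          rw [e0, e1] at hends
          exact hends
  -- extend to all j < n
  have keyall : ∀ j < n, A j * A (n - 1 - j) * (B j * B (n - 1 - j)) = -1 := by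
    intro j hjn
    rcases lt_or_ge j (n - 1) with h | h
    · exact key j h
    · have hj : j = n - 1 := by omega
      subst hj
      have h0 := key 0 (by omega)
      simp only [Nat.sub_zero] at h0
      rw [Nat.sub_self]
      linear_combination h0
  -- take the product
  have hprod : ∏ j ∈ Finset.range n,
      (A j * A (n - 1 - j) * (B j * B (n - 1 - j))) = (-1 : ℤ) ^ n := by
    rw [Finset.prod_congr rfl fun j hj => keyall j (Finset.mem_range.mp hj)]
    simp
  rw [Finset.prod_mul_distrib, Finset.prod_mul_distrib, Finset.prod_mul_distrib,
    Finset.prod_range_reflect (fun j => A j) n,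
    Finset.prod_range_reflect (fun j => B j) n] at hprod
  by_contra hodd
  rw [Nat.not_even_iff_odd] at hodd
  rw [hodd.neg_one_pow] at hprod
  nlinarith [sq_nonneg ((∏ j ∈ Finset.range n, A j) * (∏ j ∈ Finset.range n, B j)),
    hprod]
end
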